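/- On the constraint surface where H = (w² − u²)/2 = 0 and D = u·p + w·ϖ = 0, the quadratic form 𝒞 = Σ_{i<j} A_{ij}² + Σ_{i<j} B_{ij}² − Σ_{i,j} C_{ij}² vanishes identically. -/

import Mathlib

open scoped BigOperators

lemma tri_swap (n : ℕ) (f : Fin n → Fin n → ℝ) :
    ∑ i, ∑ j ∈ Finset.Iio i, f i j = ∑ i, ∑ j ∈ Finset.Ioi i, f j i := by
  rw [Finset.sum_sigma', Finset.sum_sigma']
  apply Finset.sum_nbij' (fun x => ⟨x.2, x.1⟩) (fun x => ⟨x.2, x.1⟩) <;>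
    simp [Finset.mem_Iio, Finset.mem_Ioi]

lemma full_split (n : ℕ) (f : Fin n → Fin n → ℝ) :
    ∑ i, ∑ j, f i j =
      (∑ i, ∑ j ∈ Finset.Ioi i, f i j) + (∑ i, ∑ j ∈ Finset.Ioi i, f j i)
        + ∑ i, f i i := by
  have huniv : ∀ i : Fin n, (Finset.univ : Finset (Fin n)) =
      Finset.Iio i ∪ Finset.Ici i := by
    intro i; ext j; simp [lt_or_ge]
  have hdisj : ∀ i : Fin n, Disjoint (Finset.Iio i) (Finset.Ici i) := by
    intro i
    simp [Finset.disjoint_left]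
  calc ∑ i, ∑ j, f i j
      = ∑ i, ((∑ j ∈ Finset.Iio i, f i j) + ∑ j ∈ Finset.Ici i, f i j) := by
        refine Finset.sum_congr rfl fun i _ => ?_
        rw [huniv i, Finset.sum_union (hdisj i)]
    _ = ∑ i, ((∑ j ∈ Finset.Iio i, f i j) + (f i i + ∑ j ∈ Finset.Ioi i, f i j)) := by
        refine Finset.sum_congr rfl fun i _ => ?_
        rw [Finset.Ici_eq_cons_Ioi, Finset.sum_cons]
    _ = (∑ i, ∑ j ∈ Finset.Iio i, f i j) + ((∑ i, f i i)
          + ∑ i, ∑ j ∈ Finset.Ioi i, f i j) := by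
        rw [Finset.sum_add_distrib, Finset.sum_add_distrib]
    _ = _ := by rw [tri_swap]; ring

lemma lagrange (n : ℕ) (a b : Fin n → ℝ) :
    2 * ∑ i, ∑ j ∈ Finset.Ioi i, (a i * b j - a j * b i)^2
      = 2 * ((∑ i, (a i)^2) * (∑ i, (b i)^2) - (∑ i, a i * b i)^2) := by
  have h := full_split n (fun i j => (a i * b j - a j * b i)^2)
  have hsym : (∑ i, ∑ j ∈ Finset.Ioi i, (a j * b i - a i * b j)^2)
      = ∑ i, ∑ j ∈ Finset.Ioi i, (a i * b j - a j * b i)^2 := by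
    refine Finset.sum_congr rfl fun i _ => Finset.sum_congr rfl fun j _ => by ring
  simp only [hsym, sub_self, ne_eq, OfNat.ofNat_ne_zero, not_false_eq_true, zero_pow,
    Finset.sum_const_zero, add_zero] at h
  have hfull : ∑ i, ∑ j, (a i * b j - a j * b i)^2
      = 2 * ((∑ i, (a i)^2) * (∑ i, (b i)^2) - (∑ i, a i * b i)^2) := by
    have e1 : (∑ i, (a i)^2) * (∑ i, (b i)^2) = ∑ i, ∑ j, (a i)^2 * (b j)^2 :=
      Finset.sum_mul_sum _ _ _ _
    have e2 : (∑ i, a i * b i)^2 = ∑ i, ∑ j, (a i * b i) * (a j * b j) := by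
      rw [sq]; exact Finset.sum_mul_sum _ _ _ _
    have e3 : ∑ i, ∑ j, (a i * b j - a j * b i)^2
        = ((∑ i, ∑ j, (a i)^2 * (b j)^2) + ∑ i, ∑ j, (a j)^2 * (b i)^2)
          - 2 * ∑ i, ∑ j, (a i * b i) * (a j * b j) := by
      have expand : ∀ i j : Fin n, (a i * b j - a j * b i)^2
          = ((a i)^2 * (b j)^2 + (a j)^2 * (b i)^2) - 2 * ((a i * b i) * (a j * b j)) :=
        fun i j => by ring
      simp only [expand, Finset.sum_sub_distrib, Finset.sum_add_distrib, Finset.mul_sum]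
    have e4 : (∑ i, ∑ j, (a j)^2 * (b i)^2) = ∑ i, ∑ j, (a i)^2 * (b j)^2 :=
      Finset.sum_comm
    rw [e3, e4, e1, e2]; ring
  linarith [h, hfull]

lemma cross_expand (p q : ℕ) (u pp : Fin p → ℝ) (w vv : Fin q → ℝ) :
    ∑ i, ∑ j, (-(u i * vv j) - pp i * w j)^2
      = (∑ i, (u i)^2) * (∑ j, (vv j)^2) + (∑ i, (pp i)^2) * (∑ j, (w j)^2)
        + 2 * (∑ i, u i * pp i) * (∑ j, w j * vv j) := by
  rw [Finset.sum_mul_sum, Finset.sum_mul_sum, mul_assoc, Finset.sum_mul_sum, Finset.mul_sum,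
    ← Finset.sum_add_distrib, ← Finset.sum_add_distrib]
  refine Finset.sum_congr rfl fun i _ => ?_
  rw [Finset.mul_sum, ← Finset.sum_add_distrib, ← Finset.sum_add_distrib]
  refine Finset.sum_congr rfl fun j _ => by ring

/-- On the constraint surface H = D = 0, the quadratic Casimir
𝒞 = Σ_{i<j} A_{ij}² + Σ_{i<j} B_{ij}² − Σ_{i,j} C_{ij}² vanishes. -/
theorem casimir_vanishes_on_constraint_surface (p q : ℕ)
    (u pp : Fin p → ℝ) (w vv : Fin q → ℝ)
    (hH : ∑ j, (w j)^2 = ∑ i, (u i)^2)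
    (hD : (∑ i, u i * pp i) + ∑ j, w j * vv j = 0) :
    (∑ i, ∑ j ∈ Finset.Ioi i, (u i * pp j - u j * pp i)^2)
      + (∑ i, ∑ j ∈ Finset.Ioi i, (w i * vv j - w j * vv i)^2)
      - (∑ i, ∑ j, (-(u i * vv j) - pp i * w j)^2) = 0 := by
  have h1 := lagrange p u pp
  have h2 := lagrange q w vv
  have h3 := cross_expand p q u pp w vv
  have hc : (∑ j, w j * vv j) = -(∑ i, u i * pp i) := by linarith
  rw [h3]
  linear_combination h1/2 + h2/2 + ((∑ j, (vv j)^2) - (∑ i, (pp i)^2)) * hH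
    + (-(∑ i, u i * pp i) - (∑ j, w j * vv j)) * hD
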